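/- Let s be such that 2s is an integer with 2s ≥ 2, and l real. If the Frobenius series p₁(r) = (r-2)^{2s}Σ_{n≥0}Pₙ(r-2)ⁿ (P₀ ≠ 0) formally solves r(r-2)P'' + (6 - 2r - 4rs + r²s)P' + (2 - l(l+1) + 6s - rs(1+2s))P = 0, then its coefficients satisfy -s(2-n-2s+2s)P_{n-1} + (2-l(l+1)+n²+n(4s-3)+2s(2s-3)+4s(1-s))Pₙ + 2(1+n+2s)(1+n)P_{n+1} = 0, and the series can terminate to a polynomial of degree 2s+1 only if s = -l(l-1)(l+1)(l+2)/6. -/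

import Mathlib

open PowerSeries in
/-- Family G7 around the regular singular point `r = 2`: if the Frobenius series
`p₁(r) = (r-2)^{2s} Σ Pₙ (r-2)ⁿ` (written in the variable `w = r - 2`, i.e. the power
series `X^{2s}·Σ Pₙ Xⁿ`) formally solves the confluent Heun-type equation, then its
coefficients satisfy the stated three-term recurrence, and the series can terminate to a
polynomial of degree `2s+1` only if `s = -l(l-1)(l+1)(l+2)/6`. -/
theorem stmt_18 (s l : ℝ) (N : ℕ) (hN2 : 2 ≤ N) (hN : (N : ℝ) = 2 * s)
    (P : ℕ → ℝ) (hP0 : P 0 ≠ 0)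
    (hode :
      ((X + C 2) * X) * derivativeFun (derivativeFun (X ^ N * mk P)) +
        (C 6 - C 2 * (X + C 2) - C (4 * s) * (X + C 2) +
          C s * (X + C 2) ^ 2) * derivativeFun (X ^ N * mk P) +
        (C (2 - l * (l + 1) + 6 * s) - C (s * (1 + 2 * s)) * (X + C 2)) *
          (X ^ N * mk P) = 0) :
    (∀ n : ℕ,
      -s * (2 - (n : ℝ) - 2 * s + 2 * s) * (if n = 0 then 0 else P (n - 1)) +
        (2 - l * (l + 1) + (n : ℝ) ^ 2 + (n : ℝ) * (4 * s - 3) + 2 * s * (2 * s - 3) +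
          4 * s * (1 - s)) * P n +
        2 * (1 + (n : ℝ) + 2 * s) * (1 + (n : ℝ)) * P (n + 1) = 0) ∧
    ((∀ n : ℕ, 2 ≤ n → P n = 0) → P 1 ≠ 0 →
      s = -((l : ℝ) * (l - 1) * (l + 1) * (l + 2) / 6)) := by
  obtain ⟨M, rfl⟩ : ∃ M, N = M + 2 := ⟨N - 2, by omega⟩
  set G : PowerSeries ℝ := X ^ (M + 2) * mk P with hG
  have hQ : ∀ m, coeff m G = if M + 2 ≤ m then P (m - (M + 2)) else 0 := by
    intro m
    rw [hG, coeff_X_pow_mul']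
    simp [coeff_mk]
  have hode' :
      X * (X * derivativeFun (derivativeFun G)) +
        C 2 * (X * derivativeFun (derivativeFun G)) +
        C (2 - 4 * s) * derivativeFun G +
        C (-2 : ℝ) * (X * derivativeFun G) +
        C s * (X * (X * derivativeFun G)) +
        C (2 - l * (l + 1) + 4 * s - 4 * s ^ 2) * G +
        C (-(s * (1 + 2 * s))) * (X * G) = 0 := by
    rw [hG]
    simp only [map_sub, map_add, map_mul, map_neg, map_one, map_pow, map_ofNat] at hode ⊢
    linear_combination hode
  have hE : ∀ k : ℕ,
      ((k : ℝ) + 2) * ((k : ℝ) + 1) * (if M ≤ k then P (k - M) else 0) +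
        2 * ((k : ℝ) + 3) * ((k : ℝ) + 2) * (if M ≤ k + 1 then P (k + 1 - M) else 0) +
        (2 - 4 * s) * ((k : ℝ) + 3) * (if M ≤ k + 1 then P (k + 1 - M) else 0) +
        (-2) * ((k : ℝ) + 2) * (if M ≤ k then P (k - M) else 0) +
        s * ((k : ℝ) + 1) * (if M + 1 ≤ k then P (k - (M + 1)) else 0) +
        (2 - l * (l + 1) + 4 * s - 4 * s ^ 2) * (if M ≤ k then P (k - M) else 0) -
        s * (1 + 2 * s) * (if M + 1 ≤ k then P (k - (M + 1)) else 0) = 0 := by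
    intro k
    have h2 := congrArg (coeff (k + 2)) hode'
    have x1 : ∀ f : PowerSeries ℝ, coeff (k + 2) (X * f) = coeff (k + 1) f :=
      fun f => coeff_succ_X_mul (k + 1) f
    have x2 : ∀ f : PowerSeries ℝ, coeff (k + 1) (X * f) = coeff k f :=
      fun f => coeff_succ_X_mul k f
    have cd : ∀ (f : PowerSeries ℝ) (n : ℕ), coeff n (derivativeFun f) = coeff (n + 1) f * (n + 1) :=
      fun f n => coeff_derivative f n
    simp only [map_add, map_zero, coeff_C_mul, x1, x2, cd, hQ] at h2
    push_cast at h2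
    linear_combination h2
  have hrec : ∀ n : ℕ,
      -s * (2 - (n : ℝ) - 2 * s + 2 * s) * (if n = 0 then 0 else P (n - 1)) +
        (2 - l * (l + 1) + (n : ℝ) ^ 2 + (n : ℝ) * (4 * s - 3) + 2 * s * (2 * s - 3) +
          4 * s * (1 - s)) * P n +
        2 * (1 + (n : ℝ) + 2 * s) * (1 + (n : ℝ)) * P (n + 1) = 0 := by
    intro n
    have h := hE (M + n)
    have q2 : (if M ≤ M + n then P (M + n - M) else 0) = P n := by
      rw [if_pos (by omega)]; congr 1; omega
    have q3 : (if M ≤ M + n + 1 then P (M + n + 1 - M) else 0) = P (n + 1) := by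
      rw [if_pos (by omega)]; congr 1; omega
    have q1 : (if M + 1 ≤ M + n then P (M + n - (M + 1)) else 0)
        = (if n = 0 then 0 else P (n - 1)) := by
      rcases Nat.eq_zero_or_pos n with h0 | h0
      · subst h0; rw [if_neg (by omega), if_pos rfl]
      · rw [if_pos (by omega), if_neg (by omega)]; congr 1; omega
    rw [q1, q2, q3] at h
    have hM : (M : ℝ) = 2 * s - 2 := by push_cast at hN; linarith
    push_cast at h
    rw [hM] at h
    linear_combination h
  refine ⟨hrec, fun hterm hP1 => ?_⟩
  have e0 := hrec 0
  have e1 := hrec 1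
  simp only [if_pos rfl] at e0
  rw [if_neg (by omega)] at e1
  rw [hterm 2 (by omega)] at e1
  push_cast at e0 e1
  have key : ((l * (l + 1)) ^ 2 - 2 * (l * (l + 1)) + 6 * s) * P 1 = 0 := by
    linear_combination s * e0 + (2 - l * (l + 1) - 2 * s) * e1
  rcases mul_eq_zero.mp key with hk | hk
  · linear_combination hk / 6
  · exact absurd hk hP1
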